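/- Let w be an analytic solution on the unit disk of w'' + p(z) w = 0 with w(0) = 0, w'(0) = 1, where p is analytic. Then for 0 < r < 1 and fixed θ: |w(re^{iθ})|² · Re( re^{iθ} w'(re^{iθ}) / w(re^{iθ}) ) = r ∫₀ʳ |w'(ρe^{iθ})|² dρ - r ∫₀ʳ Re( ρ² e^{2iθ} p(ρe^{iθ}) ) · |w(ρe^{iθ})|²/ρ² dρ. -/

import Mathlib

open Metric intervalIntegral

/-- Gabriel's identity: if `w` solves `w'' + p w = 0` on the unit disk with `w(0)=0`,
`w'(0)=1`, then for `0 < r < 1` and fixed `θ` (with `w(re^{iθ}) ≠ 0`):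
`|w(re^{iθ})|² Re(re^{iθ} w'/w) = r∫₀ʳ |w'|² dρ - r∫₀ʳ Re(ρ²e^{2iθ} p) |w|²/ρ² dρ`. -/
theorem gabriel_identity (p w : ℂ → ℂ)
    (hp : AnalyticOnNhd ℂ p (ball (0 : ℂ) 1))
    (hw : AnalyticOnNhd ℂ w (ball (0 : ℂ) 1))
    (hode : ∀ z ∈ ball (0 : ℂ) 1, deriv (deriv w) z + p z * w z = 0)
    (h0 : w 0 = 0) (h1 : deriv w 0 = 1)
    (r θ : ℝ) (hr0 : 0 < r) (hr1 : r < 1)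
    (hne : w (r * Complex.exp (θ * Complex.I)) ≠ 0) :
    (‖w (r * Complex.exp (θ * Complex.I))‖) ^ 2 *
        ((r * Complex.exp (θ * Complex.I) *
            deriv w (r * Complex.exp (θ * Complex.I)) /
            w (r * Complex.exp (θ * Complex.I))).re) =
      (r * ∫ ρ in (0 : ℝ)..r,
          (‖deriv w (ρ * Complex.exp (θ * Complex.I))‖) ^ 2) -
        r * ∫ ρ in (0 : ℝ)..r,
          ((ρ : ℂ) ^ 2 * Complex.exp (2 * θ * Complex.I) *
              p (ρ * Complex.exp (θ * Complex.I))).re *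
            (‖w (ρ * Complex.exp (θ * Complex.I))‖) ^ 2 / ρ ^ 2 := by
  set e : ℂ := Complex.exp (θ * Complex.I) with he
  have hee : ‖e‖ = 1 := Complex.norm_exp_ofReal_mul_I θ
  -- membership of radius points in the ball
  have hmem : ∀ ρ : ℝ, ρ ∈ Set.uIcc (0:ℝ) r → (ρ : ℂ) * e ∈ ball (0:ℂ) 1 := by
    intro ρ hρ
    rw [Set.uIcc_of_le hr0.le] at hρ
    rw [mem_ball_zero_iff]
    have h1' : ‖(ρ:ℂ) * e‖ = |ρ| := by
      rw [norm_mul]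
      simp [hee]
    rw [h1', abs_of_nonneg hρ.1]
    exact lt_of_le_of_lt hρ.2 hr1
  -- derivative along the ray
  have key : ∀ (F : ℂ → ℂ), AnalyticOnNhd ℂ F (ball 0 1) → ∀ ρ : ℝ,
      (ρ:ℂ) * e ∈ ball (0:ℂ) 1 →
      HasDerivAt (fun t : ℝ => F ((t:ℂ) * e)) (e * deriv F ((ρ:ℂ)*e)) ρ := by
    intro F hF ρ hm
    have hc : HasDerivAt (fun t : ℝ => (t:ℂ) * e) e ρ := by
      simpa using (Complex.ofRealCLM.hasDerivAt (x := ρ)).mul_const e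
    have hF' : HasDerivAt F (deriv F ((ρ:ℂ)*e)) ((ρ:ℂ)*e) :=
      ((hF _ hm).differentiableAt).hasDerivAt
    have h2 := (hF'.hasFDerivAt.restrictScalars ℝ).comp_hasDerivAt ρ hc
    simpa [Function.comp_def, mul_comm] using h2
  -- the function G
  set G : ℝ → ℝ := fun ρ => ((starRingEnd ℂ) (w ((ρ:ℂ)*e)) * (e * deriv w ((ρ:ℂ)*e))).re with hG
  set A : ℝ → ℝ := fun ρ => (‖deriv w ((ρ:ℂ)*e)‖)^2 with hA
  set B : ℝ → ℝ := fun ρ => (e^2 * p ((ρ:ℂ)*e)).re * (‖w ((ρ:ℂ)*e)‖)^2 with hB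
  have hderiv : ∀ ρ ∈ Set.uIcc (0:ℝ) r, HasDerivAt G (A ρ - B ρ) ρ := by
    intro ρ hρ
    have hm := hmem ρ hρ
    have hf := key w hw ρ hm
    have hg := key (deriv w) (hw.deriv) ρ hm
    have hconj : HasDerivAt (fun t : ℝ => (starRingEnd ℂ) (w ((t:ℂ)*e)))
        ((starRingEnd ℂ) (e * deriv w ((ρ:ℂ)*e))) ρ := hf.star
    have hmul := hconj.mul (hg.const_mul e)
    have hre := (Complex.reCLM.hasFDerivAt (x := _)).comp_hasDerivAt ρ hmul
    have hode' : deriv (deriv w) ((ρ:ℂ)*e) = -(p ((ρ:ℂ)*e) * w ((ρ:ℂ)*e)) :=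
      eq_neg_of_add_eq_zero_left (hode _ hm)
    have hval : ((starRingEnd ℂ) (e * deriv w ((ρ:ℂ)*e)) * (e * deriv w ((ρ:ℂ)*e)) +
        (starRingEnd ℂ) (w ((ρ:ℂ)*e)) * (e * (e * deriv (deriv w) ((ρ:ℂ)*e)))).re = A ρ - B ρ := by
      rw [hode']
      have e1 : ((starRingEnd ℂ) (e * deriv w ((ρ:ℂ)*e)) * (e * deriv w ((ρ:ℂ)*e))).re
          = A ρ := by
        rw [show ∀ z : ℂ, (starRingEnd ℂ) z * z = (Complex.normSq z : ℂ) from fun z => by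
          rw [mul_comm, Complex.mul_conj]]
        simp [hA, Complex.normSq_eq_norm_sq, map_mul, hee, mul_pow, ← Complex.ofReal_pow]
      have e2 : ((starRingEnd ℂ) (w ((ρ:ℂ)*e)) * (e * (e * -(p ((ρ:ℂ)*e) * w ((ρ:ℂ)*e))))).re
          = - B ρ := by
        have h3 : (starRingEnd ℂ) (w ((ρ:ℂ)*e)) * (e * (e * -(p ((ρ:ℂ)*e) * w ((ρ:ℂ)*e))))
            = -(e ^ 2 * p ((ρ:ℂ)*e)) * ((w ((ρ:ℂ)*e)) * (starRingEnd ℂ) (w ((ρ:ℂ)*e))) := by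
          ring
        rw [h3, Complex.mul_conj]
        simp [hB, Complex.mul_re, Complex.normSq_eq_norm_sq, ← Complex.ofReal_pow]
      rw [Complex.add_re, e1, e2]
      ring
    have h4 : HasDerivAt G
        (((starRingEnd ℂ) (e * deriv w ((ρ:ℂ)*e)) * (e * deriv w ((ρ:ℂ)*e)) +
          (starRingEnd ℂ) (w ((ρ:ℂ)*e)) * (e * (e * deriv (deriv w) ((ρ:ℂ)*e)))).re) ρ := hre
    rw [hval] at h4
    exact h4
  -- continuity of the integrands
  have hcont : ∀ (F : ℂ → ℂ), AnalyticOnNhd ℂ F (ball 0 1) →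
      ContinuousOn (fun ρ : ℝ => F ((ρ:ℂ) * e)) (Set.uIcc (0:ℝ) r) := by
    intro F hF
    refine (hF.continuousOn.comp ?_ ?_)
    · exact Continuous.continuousOn (by continuity)
    · intro ρ hρ; exact hmem ρ hρ
  have intA : IntervalIntegrable A MeasureTheory.volume 0 r := by
    apply ContinuousOn.intervalIntegrable
    exact (continuous_norm.comp_continuousOn (hcont (deriv w) hw.deriv)).pow 2
  have intB : IntervalIntegrable B MeasureTheory.volume 0 r := by
    apply ContinuousOn.intervalIntegrable
    exact (Complex.continuous_re.comp_continuousOn (continuousOn_const.mul (hcont p hp))).mul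
      ((continuous_norm.comp_continuousOn (hcont w hw)).pow 2)
  have hFTC : ∫ ρ in (0:ℝ)..r, (A ρ - B ρ) = G r - G 0 :=
    intervalIntegral.integral_eq_sub_of_hasDerivAt hderiv (intA.sub intB)
  have hG0 : G 0 = 0 := by simp [hG, h0]
  have hsplit : ∫ ρ in (0:ℝ)..r, (A ρ - B ρ)
      = (∫ ρ in (0:ℝ)..r, A ρ) - ∫ ρ in (0:ℝ)..r, B ρ :=
    intervalIntegral.integral_sub intA intB
  have hGr : G r = (∫ ρ in (0:ℝ)..r, A ρ) - ∫ ρ in (0:ℝ)..r, B ρ := by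
    rw [← hsplit, hFTC, hG0, sub_zero]
  have hcongr : (∫ ρ in (0:ℝ)..r,
      ((ρ : ℂ) ^ 2 * Complex.exp (2 * θ * Complex.I) * p ((ρ:ℂ) * e)).re *
        (‖w ((ρ:ℂ) * e)‖) ^ 2 / ρ ^ 2) = ∫ ρ in (0:ℝ)..r, B ρ := by
    apply intervalIntegral.integral_congr_ae
    have h0' : ({(0:ℝ)} : Set ℝ)ᶜ ∈ MeasureTheory.ae MeasureTheory.volume :=
      MeasureTheory.compl_mem_ae_iff.mpr Real.volume_singleton
    filter_upwards [h0'] with x hx _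
    have hx0 : x ≠ 0 := by simpa using hx
    have hexp : Complex.exp (2 * θ * Complex.I) = e ^ 2 := by
      rw [he, sq, ← Complex.exp_add]
      norm_num
      ring_nf
    rw [hexp]
    have hrex : ((x:ℂ)^2 * e^2 * p ((x:ℂ)*e)).re = x^2 * (e^2 * p ((x:ℂ)*e)).re := by
      rw [mul_assoc, ← Complex.ofReal_pow, Complex.re_ofReal_mul]
    rw [hrex, hB]
    field_simp
  have hLHS : (‖w ((r:ℂ) * e)‖) ^ 2 *
      (((r:ℂ) * e * deriv w ((r:ℂ)*e) / w ((r:ℂ)*e)).re) = r * G r := by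
    set v := w ((r:ℂ)*e) with hv
    set u := (r:ℂ) * e * deriv w ((r:ℂ)*e) with hu
    have h5 : u / v * (v * (starRingEnd ℂ) v) = u * (starRingEnd ℂ) v := by
      field_simp
    have h6 : ((‖v‖)^2 : ℝ) * (u/v).re = (u * (starRingEnd ℂ) v).re := by
      rw [← h5, Complex.mul_conj]
      rw [show ((Complex.normSq v : ℂ)) = ((Complex.normSq v : ℝ) : ℂ) from rfl]
      rw [Complex.mul_re]
      simp [Complex.normSq_eq_norm_sq, ← Complex.ofReal_pow]
      ring
    rw [h6]
    have h7 : u * (starRingEnd ℂ) v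
        = (r:ℂ) * ((starRingEnd ℂ) v * (e * deriv w ((r:ℂ)*e))) := by
      rw [hu]; ring
    rw [h7, Complex.re_ofReal_mul, hG]
  rw [hLHS, hcongr,
    show (∫ ρ in (0:ℝ)..r, ‖deriv w ((ρ:ℂ)*e)‖^2) = ∫ ρ in (0:ℝ)..r, A ρ from rfl,
    hGr]
  ring
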